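/- With g constructed from f as above (g(0,x) = h(x), g(1,x) = f(x) + h(x)): if f is ε-far from being monotone non-increasing (every monotone non-increasing f' differs from f on more than ε·2^n points), then g is ε/2-far from being submodular (every submodular g' differs from g on more than (ε/2)·2^{n+1} points). -/

import Mathlib

/-- The `x`-part of a point `(b, x) ∈ {0,1}^{n+1}`, where coordinate `0` is the extra bit. -/
noncomputable def projTail (n : ℕ) (S : Finset (Fin (n + 1))) : Finset (Fin n) :=
  S.preimage Fin.succ (Fin.succ_injective n).injOn

def liftTail (n : ℕ) (x : Finset (Fin n)) : Finset (Fin (n + 1)) :=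
  x.map ⟨Fin.succ, Fin.succ_injective n⟩

lemma mem_liftTail {n : ℕ} {x : Finset (Fin n)} {a : Fin (n+1)} :
    a ∈ liftTail n x ↔ ∃ b ∈ x, b.succ = a := by
  simp [liftTail]

lemma zero_not_mem_liftTail {n : ℕ} (x : Finset (Fin n)) :
    (0 : Fin (n+1)) ∉ liftTail n x := by
  simp [mem_liftTail, Fin.succ_ne_zero]

lemma projTail_liftTail {n : ℕ} (x : Finset (Fin n)) :
    projTail n (liftTail n x) = x := by
  ext a
  simp [projTail, mem_liftTail, Finset.mem_preimage, Fin.succ_injective n |>.eq_iff]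

lemma projTail_insert_zero_liftTail {n : ℕ} (x : Finset (Fin n)) :
    projTail n (insert (0 : Fin (n+1)) (liftTail n x)) = x := by
  ext a
  simp [projTail, mem_liftTail, Finset.mem_preimage, Fin.succ_ne_zero,
    Fin.succ_injective n |>.eq_iff]

theorem far_from_monotone_implies_far_from_submodular (n : ℕ) (ε : ℝ)
    (f : Finset (Fin n) → ℝ)
    (hfar : ∀ f' : Finset (Fin n) → ℝ,
      (∀ x y : Finset (Fin n), x ⊆ y → f' y ≤ f' x) →
      ε * 2 ^ n <
        ((Finset.univ.filter (fun S : Finset (Fin n) => f' S ≠ f S)).card : ℝ)) :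
    let M : ℝ := f ∅
    let h : Finset (Fin n) → ℝ := fun x => M * x.card * ((n - x.card : ℕ) : ℝ)
    let g : Finset (Fin (n + 1)) → ℝ := fun S =>
      (if (0 : Fin (n + 1)) ∈ S then f (projTail n S) else 0) + h (projTail n S)
    ∀ g' : Finset (Fin (n + 1)) → ℝ,
      (∀ (z : Finset (Fin (n + 1))) (i j : Fin (n + 1)), i ≠ j → i ∉ z → j ∉ z →
        g' z + g' (insert j (insert i z)) ≤ g' (insert i z) + g' (insert j z)) →
      (ε / 2) * 2 ^ (n + 1) <
        ((Finset.univ.filter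
          (fun S : Finset (Fin (n + 1)) => g' S ≠ g S)).card : ℝ) := by
  intro M h g g' hsub
  set F : Finset (Fin n) → ℝ :=
    fun x => g' (insert (0 : Fin (n+1)) (liftTail n x)) - g' (liftTail n x) with hF
  -- single-step monotonicity
  have step : ∀ (x : Finset (Fin n)) (j : Fin n), j ∉ x → F (insert j x) ≤ F x := by
    intro x j hj
    have hjz : j.succ ∉ liftTail n x := by
      simp only [mem_liftTail]
      rintro ⟨b, hb, hbe⟩
      exact hj ((Fin.succ_injective n hbe) ▸ hb)
    have hlift : liftTail n (insert j x) = insert j.succ (liftTail n x) := by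
      ext a
      simp only [mem_liftTail, Finset.mem_insert]
      constructor
      · rintro ⟨b, hb | hb, rfl⟩
        · exact Or.inl (by rw [hb])
        · exact Or.inr ⟨b, hb, rfl⟩
      · rintro (rfl | ⟨b, hb, rfl⟩)
        · exact ⟨j, Or.inl rfl, rfl⟩
        · exact ⟨b, Or.inr hb, rfl⟩
    have key := hsub (liftTail n x) 0 j.succ (Ne.symm (Fin.succ_ne_zero j))
      (zero_not_mem_liftTail x) hjz
    have hcomm : insert j.succ (insert (0 : Fin (n+1)) (liftTail n x))
        = insert (0 : Fin (n+1)) (insert j.succ (liftTail n x)) := by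
      exact Finset.insert_comm _ _ _
    rw [hF]
    simp only [hlift, hcomm] at key ⊢
    linarith
  -- full monotonicity
  have mono : ∀ x y : Finset (Fin n), x ⊆ y → F y ≤ F x := by
    intro x y hxy
    obtain ⟨d, hd⟩ : ∃ d, (y \ x).card = d := ⟨_, rfl⟩
    induction d generalizing x with
    | zero =>
      have : y = x := by
        have := Finset.sdiff_eq_empty_iff_subset.mp (Finset.card_eq_zero.mp hd)
        exact Finset.Subset.antisymm this hxy
      simp [this]
    | succ k ih =>
      have hne : (y \ x).Nonempty := by
        rw [← Finset.card_pos, hd]; omega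
      obtain ⟨j, hjmem⟩ := hne
      have hjy : j ∈ y := (Finset.mem_sdiff.mp hjmem).1
      have hjx : j ∉ x := (Finset.mem_sdiff.mp hjmem).2
      have hsub' : insert j x ⊆ y := Finset.insert_subset hjy hxy
      have hcard : (y \ insert j x).card = k := by
        have : y \ insert j x = (y \ x).erase j := by
          ext a; simp [Finset.mem_sdiff, Finset.mem_erase]; tauto
        rw [this, Finset.card_erase_of_mem hjmem, hd]
        omega
      exact le_trans (ih (insert j x) hsub' hcard) (step x j hjx)
  have hlt := hfar F mono
  -- counting: injection from bad points of F into bad points of g'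
  have hcount : ((Finset.univ.filter (fun S : Finset (Fin n) => F S ≠ f S)).card : ℝ)
      ≤ ((Finset.univ.filter (fun S : Finset (Fin (n + 1)) => g' S ≠ g S)).card : ℝ) := by
    have : (Finset.univ.filter (fun S : Finset (Fin n) => F S ≠ f S)).card
        ≤ (Finset.univ.filter (fun S : Finset (Fin (n + 1)) => g' S ≠ g S)).card := by
      apply Finset.card_le_card_of_injOn
        (fun x => if g' (liftTail n x) ≠ g (liftTail n x) then liftTail n x
          else insert (0 : Fin (n+1)) (liftTail n x))
      · intro x hx
        simp only [Finset.mem_coe, Finset.mem_filter, Finset.mem_univ, true_and] at hx ⊢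
        by_cases hc : g' (liftTail n x) ≠ g (liftTail n x)
        · simp [hc]
        · push_neg at hc
          rw [if_neg (by simpa using hc)]
          intro heq
          apply hx
          have hg1 : g (insert (0 : Fin (n+1)) (liftTail n x))
              = f x + h x := by
            simp [g, projTail_insert_zero_liftTail, Finset.mem_insert]
          have hg0 : g (liftTail n x) = h x := by
            simp [g, projTail_liftTail, zero_not_mem_liftTail]
          rw [hF]
          simp only [heq, hg1, hc, hg0]
          ring
      · intro a _ b _ hab
        have := congrArg (projTail n) hab
        simpa only [apply_ite (projTail n), projTail_liftTail,
          projTail_insert_zero_liftTail, ite_self] using this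
    exact_mod_cast this
  have : (ε / 2) * 2 ^ (n + 1) = ε * 2 ^ n := by ring
  rw [this]
  linarith
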